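/- Let x = (x_S)_{S ∈ 𝒮^P, P ∈ 𝒫} be any family of nonnegative reals indexed by suffix chains, and let x̃ be its projection. Then x̃ satisfies the chain-structure constraints (D3): for every chain P ∈ 𝒫, every job j ∈ P, and every i ∈ {1,…,k−1}, ∑_{j' ∈ P : j' ⪯ j} x̃^{i+1}_{j'} ≤ ∑_{j' ∈ P : j' ⪯ j} x̃^{i}_{j'}. -/
import Mathlib


/-- A suffix chain with `k` layers of a chain with `m` jobs.  The jobs of the chain are
`Fin m` (ordered by the precedence order `⪯`), and the chain is extended by the dummy
element `⊥`, encoded as the last element of `Fin (m+1)`.  A suffix is encoded by its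
starting point `a : Fin (m+1)` (so `a = ⊥` encodes the empty suffix), namely
`suffix a = {j : Fin m | a ≤ j.castSucc}`, and `suffix a ⊇ suffix b ↔ a ≤ b`.
A suffix chain `S₁ ⊇ S₂ ⊇ … ⊇ S_k` is therefore a monotone map `Fin k → Fin (m+1)`
of starting points. -/
def SuffixChain (k m : ℕ) : Type :=
  {S : Fin k → Fin (m + 1) // ∀ i i' : Fin k, i ≤ i' → S i ≤ S i'}

noncomputable instance (k m : ℕ) : Fintype (SuffixChain k m) :=
  Subtype.fintype _

/-- The projection `x̃` of a family `x` indexed by suffix chains: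
`x̃ⁱⱼ = ∑_{S ∈ 𝒮 : Sᵢ = suffix j} x_S`, where `j` ranges over `P ∪ {⊥}`,
encoded as `Fin (m+1)`. -/
noncomputable def proj {k m : ℕ} (x : SuffixChain k m → ℝ) (i : Fin k) (j : Fin (m + 1)) : ℝ :=
  ∑ S : SuffixChain k m, if S.1 i = j then x S else 0

/-- For any nonnegative family `x = (x_S)_{S ∈ 𝒮^P, P ∈ 𝒫}` indexed by
suffix chains, its projection `x̃` satisfies the chain-structure constraints (D3):
for every chain `P`, every job `j ∈ P` and every `i ∈ {1,…,k-1}`,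
`∑_{j' ⪯ j} x̃^{i+1}_{j'} ≤ ∑_{j' ⪯ j} x̃^{i}_{j'}`.
Here the `q` chains are indexed by `Fin q`, chain `P` having jobs `Fin (m P)`. -/
theorem stmt0 (q k : ℕ) (m : Fin q → ℕ)
    (x : (P : Fin q) → SuffixChain k (m P) → ℝ)
    (hx : ∀ (P : Fin q) (S : SuffixChain k (m P)), 0 ≤ x P S) :
    ∀ (P : Fin q) (j : Fin (m P)) (i : ℕ) (hi : i + 1 < k),
      ∑ j' ∈ Finset.Iic j, proj (x P) ⟨i + 1, hi⟩ j'.castSucc ≤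
        ∑ j' ∈ Finset.Iic j, proj (x P) ⟨i, Nat.lt_of_succ_lt hi⟩ j'.castSucc := by
  intro P j i hi
  have key : ∀ (i' : Fin k),
      ∑ j' ∈ Finset.Iic j, proj (x P) i' j'.castSucc
        = ∑ S : SuffixChain k (m P), if S.1 i' ≤ j.castSucc then x P S else 0 := by
    intro i'
    unfold proj
    rw [Finset.sum_comm]
    refine Finset.sum_congr rfl fun S _ => ?_
    by_cases h : S.1 i' ≤ j.castSucc
    · have hlt : S.1 i' < Fin.last _ := lt_of_le_of_lt h (Fin.castSucc_lt_last j)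
      rw [if_pos h]
      have hmem : (S.1 i').castPred hlt.ne ∈ Finset.Iic j := by
        rw [Finset.mem_Iic, ← Fin.castSucc_le_castSucc_iff, Fin.castSucc_castPred]
        exact h
      rw [Finset.sum_eq_single_of_mem ((S.1 i').castPred hlt.ne) hmem]
      · rw [if_pos (Fin.castSucc_castPred _ _).symm]
      · intro b _ hb
        rw [if_neg]
        intro hc
        exact hb (Fin.castSucc_injective _ (by rw [Fin.castSucc_castPred, hc]))
    · rw [if_neg h, Finset.sum_eq_zero]
      intro b hb
      rw [if_neg]
      intro hc
      exact h (hc ▸ (Fin.castSucc_le_castSucc_iff.mpr (Finset.mem_Iic.mp hb)))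
  rw [key, key]
  refine Finset.sum_le_sum fun S _ => ?_
  by_cases h : S.1 ⟨i+1,hi⟩ ≤ j.castSucc
  · rw [if_pos h, if_pos (le_trans (S.2 _ _ (by simp [Fin.le_def])) h)]
  · rw [if_neg h]
    split
    · exact hx P S
    · rfl
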